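/- The dual Pieri formula: for a partition ν of length at most n and 0 ≤ k ≤ n, s_ν(x_1,...,x_n) · e_k(x_1,...,x_n) = ∑ s_{ν+ε}(x_1,...,x_n), where the sum is over ε ∈ {0,1}^n with |ε| = k such that ν + ε is a partition. -/

import Mathlib

open Finset in
lemma detA {F : Type*} [CommRing F] (n k : ℕ) (x : Fin n → F) (μ : Fin n → ℕ) :
    (Matrix.of fun i j : Fin n => x j ^ μ i).det *
      ∑ S ∈ powersetCard k (univ : Finset (Fin n)), ∏ j ∈ S, x j =
    ∑ S ∈ powersetCard k (univ : Finset (Fin n)),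
      (Matrix.of fun i j : Fin n => x j ^ (μ i + if i ∈ S then 1 else 0)).det := by
  classical
  simp only [Matrix.det_apply', Matrix.of_apply]
  rw [Finset.sum_mul, Finset.sum_comm]
  refine Finset.sum_congr rfl fun σ _ => ?_
  rw [Finset.mul_sum]
  refine Finset.sum_nbij' (i := fun S => S.image σ) (j := fun S => S.image σ.symm)
    ?_ ?_ ?_ ?_ ?_
  · intro S hS
    simp only [mem_powersetCard_univ] at hS ⊢
    rw [Finset.card_image_of_injective _ σ.injective, hS]
  · intro S hS
    simp only [mem_powersetCard_univ] at hS ⊢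
    rw [Finset.card_image_of_injective _ σ.symm.injective, hS]
  · intro S _; ext j; simp
  · intro S _; ext j; simp
  · intro S _
    have hmem : ∀ i : Fin n, (σ i ∈ S.image σ) ↔ i ∈ S := by
      intro i
      simp [Finset.mem_image, σ.injective.eq_iff]
    rw [mul_assoc]
    congr 1
    calc (∏ i : Fin n, x i ^ μ (σ i)) * ∏ j ∈ S, x j
        = (∏ i : Fin n, x i ^ μ (σ i)) * ∏ i : Fin n, x i ^ (if i ∈ S then 1 else 0) := by
          congr 1
          simp [pow_ite, Finset.prod_ite_mem]
      _ = ∏ i : Fin n, x i ^ (μ (σ i) + if i ∈ S then 1 else 0) := by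
          rw [← Finset.prod_mul_distrib]
          simp [pow_add]
      _ = ∏ i : Fin n, x i ^ (μ (σ i) + if σ i ∈ S.image σ then 1 else 0) := by
          simp_rw [hmem]

open Finset in
lemma detB {F : Type*} [CommRing F] (n : ℕ) (x : Fin n → F) (ν : Fin n → ℕ)
    (hν : Antitone ν) (S : Finset (Fin n))
    (h : ¬ ∀ i j : Fin n, i ≤ j →
        ν j + (if j ∈ S then 1 else 0) ≤ ν i + (if i ∈ S then 1 else 0)) :
    (Matrix.of fun i j : Fin n =>
        x j ^ ((ν i + (n - 1 - i.val)) + if i ∈ S then 1 else 0)).det = 0 := by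
  classical
  obtain ⟨m, rfl⟩ : ∃ m, n = m + 1 := by
    cases n with
    | zero => exact absurd (fun i _ _ => i.elim0) h
    | succ m => exact ⟨m, rfl⟩
  have h' : ¬ Antitone (fun i : Fin (m+1) => ν i + if i ∈ S then 1 else 0) := by
    intro hA; exact h fun i j hij => hA hij
  rw [Fin.antitone_iff_succ_le] at h'
  push_neg at h'
  obtain ⟨i, hi⟩ := h'
  apply Matrix.det_zero_of_row_eq (i := i.castSucc) (j := i.succ)
    (Fin.castSucc_lt_succ (i := i)).ne
  funext j
  have hcs : (i.castSucc : Fin (m+1)).val = i.val := rfl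
  have hsv : (i.succ : Fin (m+1)).val = i.val + 1 := rfl
  have hmono := hν (Fin.castSucc_lt_succ (i := i)).le
  have hlt := i.isLt
  simp only [Matrix.of_apply]
  congr 1
  by_cases h1 : i.castSucc ∈ S <;> by_cases h2 : i.succ ∈ S <;>
    simp only [h1, h2, if_pos, if_neg, if_true, if_false] at hi ⊢ <;> omega

/-- Schur polynomial as a ratio of determinants. -/
noncomputable def schurN {F : Type*} [Field F] (n : ℕ) (x : Fin n → F) (μ : Fin n → ℕ) : F :=
  (Matrix.of fun i j : Fin n => x j ^ (μ i + (n - 1 - i.val))).det /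
    (Matrix.of fun i j : Fin n => x j ^ (n - 1 - i.val)).det

/-- Dual Pieri formula: `s_ν · e_k = ∑ s_{ν+ε}` over `ε ∈ {0,1}^n`, `|ε| = k`, with
`ν + ε` a partition. -/
theorem dual_pieri_gl {F : Type*} [Field F] (n : ℕ) (x : Fin n → F)
    (ν : Fin n → ℕ) (hν : Antitone ν) (k : ℕ) (hk : k ≤ n) :
    schurN n x ν *
        ∑ S ∈ Finset.powersetCard k (Finset.univ : Finset (Fin n)), ∏ j ∈ S, x j =
      ∑ S ∈ Finset.powersetCard k (Finset.univ : Finset (Fin n)),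
        if ∀ i j : Fin n, i ≤ j →
            ν j + (if j ∈ S then 1 else 0) ≤ ν i + (if i ∈ S then 1 else 0) then
          schurN n x (fun i => ν i + if i ∈ S then 1 else 0)
        else 0 := by
  classical
  unfold schurN
  rw [div_mul_eq_mul_div, detA n k x (fun i => ν i + (n - 1 - i.val)), Finset.sum_div]
  refine Finset.sum_congr rfl fun S _ => ?_
  by_cases h : ∀ i j : Fin n, i ≤ j →
      ν j + (if j ∈ S then 1 else 0) ≤ ν i + (if i ∈ S then 1 else 0)
  · rw [if_pos h]
    congr 2
    ext i j
    simp only [Matrix.of_apply]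
    congr 1
    omega
  · rw [if_neg h, detB n x ν hν S h, zero_div]
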